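/- Let x_1,…,x_m ∈ ℝ^d satisfy max_i ‖x_i‖ ≤ 1 and be separable with margin γ ∈ (0,1], let ℓ(z) = exp(−z) be the exponential loss, and let w(·) be the gradient flow of the empirical risk L̂ started at the origin. Then for every T > 0, L̂(w(T)) ≤ 1/(γ²T). -/

import Mathlib

open scoped RealInnerProductSpace

section Aux

variable {d m : ℕ}

/-- The candidate gradient of the empirical exponential risk. -/
noncomputable def expGrad (m : ℕ) (x : Fin m → EuclideanSpace ℝ (Fin d))
    (v : EuclideanSpace ℝ (Fin d)) : EuclideanSpace ℝ (Fin d) :=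
  ∑ i, (-((1 / m : ℝ) * Real.exp (-⟪x i, v⟫))) • x i

lemma hasGradientAt_expRisk (x : Fin m → EuclideanSpace ℝ (Fin d))
    (v : EuclideanSpace ℝ (Fin d)) :
    HasGradientAt (fun u => (1 / m : ℝ) * ∑ i, Real.exp (-⟪x i, u⟫))
      (expGrad m x v) v := by
  have hterm : ∀ i : Fin m, HasFDerivAt (fun u : EuclideanSpace ℝ (Fin d) =>
      Real.exp (-⟪x i, u⟫)) ((-(Real.exp (-⟪x i, v⟫))) • innerSL ℝ (x i)) v := by
    intro i
    have h1 : HasFDerivAt (fun u : EuclideanSpace ℝ (Fin d) => ⟪x i, u⟫)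
        (innerSL ℝ (x i)) v := (innerSL ℝ (x i)).hasFDerivAt
    have h2 := (h1.neg).exp
    simpa [neg_smul, smul_smul] using h2
  have hsum : HasFDerivAt (fun u : EuclideanSpace ℝ (Fin d) =>
      ∑ i, Real.exp (-⟪x i, u⟫))
      (∑ i, (-(Real.exp (-⟪x i, v⟫))) • innerSL ℝ (x i)) v :=
    HasFDerivAt.fun_sum fun i _ => hterm i
  have hmul := hsum.const_smul (1 / m : ℝ)
  rw [hasGradientAt_iff_hasFDerivAt]
  have heq : (InnerProductSpace.toDual ℝ (EuclideanSpace ℝ (Fin d)) (expGrad m x v)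
      : EuclideanSpace ℝ (Fin d) →L[ℝ] ℝ)
      = (1 / m : ℝ) • ∑ i, (-(Real.exp (-⟪x i, v⟫))) • innerSL ℝ (x i) := by
    ext u
    simp only [expGrad, InnerProductSpace.toDual_apply_apply, sum_inner, real_inner_smul_left,
      ContinuousLinearMap.smul_apply, ContinuousLinearMap.sum_apply, innerSL_apply_apply,
      smul_eq_mul, Finset.mul_sum]
    exact Finset.sum_congr rfl fun i _ => by ring
  rw [heq]
  simpa [Pi.smul_def] using hmul

end Aux

/-- Lemma 2 of the paper. For the exponential loss
`ℓ(z) = exp(−z)`, gradient flow on the empirical risk of a dataset separable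
with margin `γ` satisfies `L̂(w(T)) ≤ 1/(γ²T)` for every `T > 0`. -/
theorem stmt_2 {d m : ℕ} (hm : 0 < m)
    (x : Fin m → EuclideanSpace ℝ (Fin d)) (hx : ∀ i, ‖x i‖ ≤ 1)
    (γ : ℝ) (hγ : γ ∈ Set.Ioc (0 : ℝ) 1)
    (w₀ : EuclideanSpace ℝ (Fin d)) (hw₀ : ‖w₀‖ = 1)
    (hsep : ∀ i, γ ≤ ⟪x i, w₀⟫)
    (L : EuclideanSpace ℝ (Fin d) → ℝ)
    (hL : ∀ v, L v = (1 / m) * ∑ i, Real.exp (-⟪x i, v⟫))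
    (w : ℝ → EuclideanSpace ℝ (Fin d)) (hw0 : w 0 = 0)
    (hflow : ∀ t : ℝ, 0 ≤ t → HasDerivAt w (-(gradient L (w t))) t) :
    ∀ T : ℝ, 0 < T → L (w T) ≤ 1 / (γ ^ 2 * T) := by
  intro T hT
  obtain ⟨hγ0, hγ1⟩ := hγ
  have hm' : (0 : ℝ) < m := by exact_mod_cast hm
  -- gradient identification
  have hgradL : ∀ v, HasGradientAt L (expGrad m x v) v := by
    intro v
    have hLeq : L = fun u => (1 / m : ℝ) * ∑ i, Real.exp (-⟪x i, u⟫) := funext hL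
    rw [hLeq]
    exact hasGradientAt_expRisk x v
  have hgrad_eq : ∀ v, gradient L v = expGrad m x v := fun v => (hgradL v).gradient
  -- positivity of L
  have hLpos : ∀ v, 0 < L v := by
    intro v
    rw [hL]
    apply mul_pos (by positivity)
    apply Finset.sum_pos (fun i _ => Real.exp_pos _)
    have : Nonempty (Fin m) := ⟨⟨0, hm⟩⟩
    exact Finset.univ_nonempty
  -- lower bound on the gradient norm
  have hnorm : ∀ v, γ * L v ≤ ‖expGrad m x v‖ := by
    intro v
    have hinner : γ * L v ≤ ⟪-(expGrad m x v), w₀⟫ := by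
      have heq : ⟪-(expGrad m x v), w₀⟫
          = ∑ i, ((1 / m : ℝ) * Real.exp (-⟪x i, v⟫)) * ⟪x i, w₀⟫ := by
        rw [inner_neg_left, expGrad, sum_inner, ← Finset.sum_neg_distrib]
        exact Finset.sum_congr rfl fun i _ => by
          rw [real_inner_smul_left]; ring
      rw [heq, hL, Finset.mul_sum, Finset.mul_sum]
      apply Finset.sum_le_sum
      intro i _
      calc γ * ((1 / m : ℝ) * Real.exp (-⟪x i, v⟫))
            = ((1 / m : ℝ) * Real.exp (-⟪x i, v⟫)) * γ := by ring
        _ ≤ ((1 / m : ℝ) * Real.exp (-⟪x i, v⟫)) * ⟪x i, w₀⟫ :=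
            mul_le_mul_of_nonneg_left (hsep i) (by positivity)
    calc γ * L v ≤ ⟪-(expGrad m x v), w₀⟫ := hinner
      _ ≤ ‖-(expGrad m x v)‖ * ‖w₀‖ := real_inner_le_norm _ _
      _ = ‖expGrad m x v‖ := by rw [norm_neg, hw₀, mul_one]
  -- derivative of t ↦ L (w t)
  have hf : ∀ t : ℝ, 0 ≤ t →
      HasDerivAt (fun s => L (w s)) (-(‖expGrad m x (w t)‖ ^ 2)) t := by
    intro t ht
    have hF : HasFDerivAt L
        (InnerProductSpace.toDual ℝ _ (expGrad m x (w t))) (w t) := hgradL (w t)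
    have := hF.comp_hasDerivAt t (hflow t ht)
    have hval : (InnerProductSpace.toDual ℝ _ (expGrad m x (w t)))
        (-(gradient L (w t))) = -(‖expGrad m x (w t)‖ ^ 2) := by
      rw [InnerProductSpace.toDual_apply_apply, hgrad_eq, inner_neg_right,
        real_inner_self_eq_norm_sq]
    rwa [hval] at this
  -- derivative of the reciprocal
  have hh : ∀ t : ℝ, 0 ≤ t → HasDerivAt (fun s => (L (w s))⁻¹)
      (‖expGrad m x (w t)‖ ^ 2 / (L (w t)) ^ 2) t := by
    intro t ht
    have := (hf t ht).inv (hLpos (w t)).ne'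
    simpa [neg_div, Pi.inv_def] using this
  -- γ² lower bound on the derivative of the reciprocal
  have hderiv_ge : ∀ t : ℝ, 0 ≤ t →
      γ ^ 2 ≤ ‖expGrad m x (w t)‖ ^ 2 / (L (w t)) ^ 2 := by
    intro t ht
    have h1 := hnorm (w t)
    have h2 := hLpos (w t)
    rw [le_div_iff₀ (by positivity)]
    calc γ ^ 2 * L (w t) ^ 2 = (γ * L (w t)) ^ 2 := by ring
      _ ≤ ‖expGrad m x (w t)‖ ^ 2 := by
          apply sq_le_sq' _ h1
          nlinarith [norm_nonneg (expGrad m x (w t))]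
  -- monotone comparison: φ t = (L (w t))⁻¹ - γ² t is monotone on [0, ∞)
  have hmono : MonotoneOn (fun t => (L (w t))⁻¹ - γ ^ 2 * t) (Set.Ici (0 : ℝ)) := by
    apply monotoneOn_of_hasDerivWithinAt_nonneg (convex_Ici 0)
      (f' := fun t => ‖expGrad m x (w t)‖ ^ 2 / (L (w t)) ^ 2 - γ ^ 2)
    · intro t ht
      exact (((hh t ht).sub ((hasDerivAt_id t).const_mul (γ ^ 2))).continuousAt).continuousWithinAt
    · intro t ht
      rw [interior_Ici] at ht
      exact (((hh t ht.le).sub (((hasDerivAt_id t).const_mul (γ ^ 2)))).hasDerivWithinAt).congr_deriv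
        (by ring)
    · intro t ht
      rw [interior_Ici] at ht
      linarith [hderiv_ge t ht.le]
  have hL0 : L (w 0) = 1 := by
    rw [hw0, hL]
    simp
    field_simp
  have key : γ ^ 2 * T ≤ (L (w T))⁻¹ := by
    have := hmono (Set.self_mem_Ici) (Set.mem_Ici.mpr hT.le) hT.le
    simp only [hL0, inv_one, mul_zero, sub_zero] at this
    linarith
  have hfT := hLpos (w T)
  rw [le_div_iff₀ (by positivity)]
  calc L (w T) * (γ ^ 2 * T) ≤ L (w T) * (L (w T))⁻¹ :=
        mul_le_mul_of_nonneg_left key hfT.le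
    _ = 1 := mul_inv_cancel₀ hfT.ne'
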